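/- For every ℓ ∈ {0,…,N−1}, every b ∈ {0,…,L−1}, every n ≥ 0 and every ā ∈ {0,…,L−1}^n: ν(J^ℓ_{bā}) = Σ_{k=0}^{N−1} (1/M)·A_b(ℓ,k)·ν(J^k_ā), where bā denotes the concatenated word (b,a_1,…,a_n) and J^k_∅ = J^k. -/

import Mathlib

open MeasureTheory ProbabilityTheory Set ENNReal

/-- The composition `f_{i₁} ∘ ⋯ ∘ f_{iₙ}` along the word `w`, for the IFS
`f_i(x) = x/L + t i` on the line. -/
noncomputable def wordMap (L : ℕ) {M : ℕ} (t : Fin M → ℕ) (w : List (Fin M)) (x : ℝ) : ℝ :=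
  w.foldr (fun i y => y / (L : ℝ) + (t i : ℝ)) x

/-- A node of the `M`-ary tree is retained (for the realization `ω`) if it and all of
its ancestors carry the label `true`. -/
def retained {M : ℕ} {Ω : Type*} (label : List (Fin M) → Ω → Bool) (ω : Ω)
    (w : List (Fin M)) : Prop :=
  ∀ v : List (Fin M), v <+: w → label v ω = true

/-- The coin tossing integer self-similar set on the line:
`Λ = ⋂_{n ≥ 1} ⋃_{w ∈ E_n} f_w (I)` where `I = [0, L·t_{M-1}/(L-1)]` and `E_n` is the set of
retained level-`n` words. -/
noncomputable def randSet (L M : ℕ) (hM : 0 < M) (t : Fin M → ℕ) {Ω : Type*}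
    (label : List (Fin M) → Ω → Bool) (ω : Ω) : Set ℝ :=
  ⋂ (n : ℕ), ⋂ (_ : 1 ≤ n),
    ⋃ (w : List (Fin M)) (_ : w.length = n) (_ : retained label ω w),
      wordMap L t w ''
        Set.Icc (0 : ℝ) ((L : ℝ) * (t ⟨M - 1, Nat.sub_lt hM Nat.one_pos⟩ : ℝ) / ((L : ℝ) - 1))

/-- The basic type interval `J^k = [(J k)·L, (J k)·L + L]`. -/
def basicInt (L : ℕ) {N : ℕ} (J : Fin N → ℤ) (k : Fin N) : Set ℝ :=
  Set.Icc ((J k : ℝ) * L) ((J k : ℝ) * L + L)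

/-- The matrix `A_a`: `A_a(ℓ,k)` is the number of maps `f_i` (counted with multiplicity,
i.e. it equals `n_i` when `S_i (J^k) = J^ℓ_a` for a distinct map `S_i`, and `0` otherwise)
mapping `J^k` onto the `a`-th level-one `L`-adic subinterval of `J^ℓ`. -/
noncomputable def Amat (L M : ℕ) (t : Fin M → ℕ) {N : ℕ} (J : Fin N → ℤ) (a : Fin L) :
    Matrix (Fin N) (Fin N) ℕ :=
  fun ℓ k => Set.ncard {i : Fin M |
    (fun x : ℝ => x / (L : ℝ) + (t i : ℝ)) '' basicInt L J k
      = Set.Icc ((J ℓ : ℝ) * L + (a : ℝ)) ((J ℓ : ℝ) * L + (a : ℝ) + 1)}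

/-- The `L`-adic subinterval `J^k_ā` of the basic interval `J^k`: it has length `L^{1−n}`
and left endpoint `(left endpoint of J^k) + L·Σ_{j=1}^n a_j·L^{−j}`. -/
noncomputable def subCylinder (L : ℕ) {N : ℕ} (J : Fin N → ℤ) (k : Fin N) {n : ℕ}
    (a : Fin n → Fin L) : Set ℝ :=
  Set.Icc ((J k : ℝ) * L + L * ∑ j : Fin n, (a j : ℝ) * (L : ℝ) ^ (-(j : ℤ) - 1))
    ((J k : ℝ) * L + L * ∑ j : Fin n, (a j : ℝ) * (L : ℝ) ^ (-(j : ℤ) - 1)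
      + (L : ℝ) ^ (1 - (n : ℤ)))


lemma preimage_affine_Icc (L : ℝ) (hL : 0 < L) (t P Q : ℝ) :
    (fun x => x / L + t) ⁻¹' Set.Icc P Q = Set.Icc ((P - t) * L) ((Q - t) * L) := by
  ext x
  simp only [Set.mem_preimage, Set.mem_Icc, ← sub_le_iff_le_add, ← le_sub_iff_add_le]
  rw [le_div_iff₀ hL, div_le_iff₀ hL]

lemma image_affine_Icc (L : ℝ) (hL : 0 < L) (t u v : ℝ) :
    (fun x : ℝ => x / L + t) '' Set.Icc u v = Set.Icc (u / L + t) (v / L + t) := by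
  have hL' : L ≠ 0 := ne_of_gt hL
  ext y
  simp only [Set.mem_image, Set.mem_Icc]
  constructor
  · rintro ⟨x, ⟨h1, h2⟩, rfl⟩
    constructor <;> gcongr
  · rintro ⟨h1, h2⟩
    refine ⟨(y - t) * L, ⟨?_, ?_⟩, ?_⟩
    · have h3 : u / L ≤ y - t := by linarith
      calc u = (u / L) * L := by rw [div_mul_cancel₀ _ hL']
        _ ≤ (y - t) * L := by gcongr
    · have h3 : y - t ≤ v / L := by linarith
      calc (y - t) * L ≤ (v / L) * L := by gcongr
        _ = v := by rw [div_mul_cancel₀ _ hL']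
    · rw [mul_div_cancel_right₀ _ hL']; ring

lemma Icc_eq_Icc_iff' {a b c d : ℝ} (h : a ≤ b) :
    Set.Icc a b = Set.Icc c d ↔ a = c ∧ b = d := by
  constructor
  · intro he
    have hcd : c ≤ d := by
      by_contra hcd
      rw [Set.Icc_eq_empty hcd] at he
      exact (Set.nonempty_Icc.2 h).ne_empty he
    have h1 := (Set.Icc_subset_Icc_iff h).1 he.le
    have h2 := (Set.Icc_subset_Icc_iff hcd).1 he.ge
    exact ⟨le_antisymm h2.1 h1.1, le_antisymm h1.2 h2.2⟩
  · rintro ⟨rfl, rfl⟩; rfl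

lemma sum_geom_le (L : ℕ) (hL : 2 ≤ L) (n : ℕ) (a : Fin n → Fin L) :
    ∑ j : Fin n, (a j : ℝ) * (L : ℝ) ^ (-(j : ℤ) - 1) ≤ 1 - (L : ℝ) ^ (-(n : ℤ)) := by
  induction n with
  | zero => simp
  | succ n ih =>
    have hL0 : (L : ℝ) ≠ 0 := by positivity
    rw [Fin.sum_univ_succ]
    have key : ∀ j : Fin n, (L : ℝ) ^ (-(j.succ : ℤ) - 1) = (L:ℝ) ^ (-(j:ℤ)-1) * (L:ℝ)⁻¹ := by
      intro j
      rw [← zpow_neg_one, ← zpow_add₀ hL0]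
      congr 1
      simp [Fin.val_succ]
      push_cast
      ring
    have hsum : ∑ j : Fin n, ((a j.succ : ℝ)) * (L : ℝ) ^ (-(j.succ : ℤ) - 1)
        = (∑ j : Fin n, ((a j.succ : ℝ)) * (L : ℝ) ^ (-(j : ℤ) - 1)) * (L:ℝ)⁻¹ := by
      rw [Finset.sum_mul]
      exact Finset.sum_congr rfl fun j _ => by rw [key j, mul_assoc]
    rw [hsum]
    have ih' := ih (fun j => a j.succ)
    have ha0 : (a 0 : ℝ) ≤ (L : ℝ) - 1 := by
      have h := (a 0).isLt
      have h2 : ((a 0 : ℕ) : ℝ) < ((L : ℕ) : ℝ) := by exact_mod_cast h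
      have h3 : (a 0 : ℕ) + 1 ≤ L := h
      have : ((a 0 : ℕ) : ℝ) + 1 ≤ (L : ℝ) := by exact_mod_cast h3
      linarith
    have h1 : (L : ℝ) ^ (-((0 : Fin (n+1)) : ℤ) - 1) = (L:ℝ)⁻¹ := by
      norm_num
    have h2 : (L : ℝ) ^ (-((n:ℕ)+1 : ℤ)) = (L:ℝ)^(-(n:ℤ)) * (L:ℝ)⁻¹ := by
      rw [← zpow_neg_one, ← zpow_add₀ hL0]; ring_nf
    have hinv : (0:ℝ) < (L:ℝ)⁻¹ := by positivity
    push_cast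
    rw [h1] at *
    have goal2 : (L : ℝ) ^ (-((n:ℤ) + 1)) = (L:ℝ)^(-(n:ℤ)) * (L:ℝ)⁻¹ := by
      rw [show (-((n:ℤ)+1)) = (-(n:ℤ)) + (-1) by ring, zpow_add₀ hL0, zpow_neg_one]
    rw [goal2]
    have hcan : (L:ℝ) * (L:ℝ)⁻¹ = 1 := mul_inv_cancel₀ hL0
    nlinarith [mul_le_mul_of_nonneg_right ih' hinv.le,
      mul_le_mul_of_nonneg_right ha0 hinv.le, hcan]

/-- `L`-adic subcylinder of the generic basic interval `[zL, zL+L]`. -/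
noncomputable def genSub (L : ℕ) (z : ℤ) {n : ℕ} (a : Fin n → Fin L) : Set ℝ :=
  Set.Icc ((z : ℝ) * L + L * ∑ j : Fin n, (a j : ℝ) * (L : ℝ) ^ (-(j : ℤ) - 1))
    ((z : ℝ) * L + L * ∑ j : Fin n, (a j : ℝ) * (L : ℝ) ^ (-(j : ℤ) - 1)
      + (L : ℝ) ^ (1 - (n : ℤ)))

lemma genSub_eq_subCylinder (L : ℕ) {N : ℕ} (J : Fin N → ℤ) (k : Fin N) {n : ℕ}
    (a : Fin n → Fin L) : genSub L (J k) a = subCylinder L J k a := rfl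

lemma genSub_subset (L : ℕ) (hL : 2 ≤ L) (z : ℤ) {n : ℕ} (a : Fin n → Fin L) :
    genSub L z a ⊆ Set.Icc ((z : ℝ) * L) ((z : ℝ) * L + L) := by
  have hL0 : (L : ℝ) ≠ 0 := by positivity
  have hLpos : (0 : ℝ) < L := by positivity
  apply Set.Icc_subset_Icc
  · have : (0:ℝ) ≤ ∑ j : Fin n, (a j : ℝ) * (L : ℝ) ^ (-(j : ℤ) - 1) := by
      apply Finset.sum_nonneg
      intro j _
      positivity
    nlinarith
  · have h1 := sum_geom_le L hL n a
    have h2 : (L : ℝ) ^ (1 - (n:ℤ)) = L * (L:ℝ) ^ (-(n:ℤ)) := by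
      rw [show (1 - (n:ℤ)) = 1 + (-(n:ℤ)) by ring, zpow_add₀ hL0, zpow_one]
    rw [h2]
    nlinarith

lemma zpow_succ_aux (L : ℝ) (hL0 : L ≠ 0) {n : ℕ} (j : Fin n) :
    L ^ (-(j.succ : ℤ) - 1) = L ^ (-(j : ℤ) - 1) * L⁻¹ := by
  rw [← zpow_neg_one, ← zpow_add₀ hL0]
  congr 1
  simp [Fin.val_succ]
  push_cast
  ring

lemma cons_sum (L : ℕ) (hL0 : (L : ℝ) ≠ 0) {n : ℕ} (b : Fin L) (a : Fin n → Fin L) :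
    ∑ j : Fin (n + 1), (((Fin.cons b a : Fin (n+1) → Fin L) j : Fin L) : ℝ) * (L : ℝ) ^ (-(j : ℤ) - 1)
      = ((b : ℝ) + ∑ j : Fin n, (a j : ℝ) * (L : ℝ) ^ (-(j : ℤ) - 1)) * (L : ℝ)⁻¹ := by
  rw [Fin.sum_univ_succ]
  simp only [Fin.cons_zero, Fin.cons_succ]
  rw [add_mul]
  congr 1
  · norm_num
  · rw [Finset.sum_mul]
    exact Finset.sum_congr rfl fun j _ => by rw [zpow_succ_aux _ hL0 j, mul_assoc]

lemma preimage_subCylinder (L : ℕ) (hL : 2 ≤ L) {M N : ℕ} (t : Fin M → ℕ) (J : Fin N → ℤ)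
    (ℓ : Fin N) (b : Fin L) {n : ℕ} (a : Fin n → Fin L) (i : Fin M) :
    (fun x : ℝ => x / L + (t i : ℝ)) ⁻¹' subCylinder L J ℓ (Fin.cons b a)
      = genSub L (J ℓ * L + (b : ℕ) - (t i : ℕ)) a := by
  have hLpos : (0 : ℝ) < L := by positivity
  have hL0 : (L : ℝ) ≠ 0 := ne_of_gt hLpos
  have hcan : (L : ℝ) * (L : ℝ)⁻¹ = 1 := mul_inv_cancel₀ hL0
  rw [subCylinder, genSub, preimage_affine_Icc _ hLpos, cons_sum L hL0]
  have hmid : (L : ℝ) * (((b : ℝ) + ∑ j : Fin n, (a j : ℝ) * (L : ℝ) ^ (-(j : ℤ) - 1)) * (L : ℝ)⁻¹)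
      = (b : ℝ) + ∑ j : Fin n, (a j : ℝ) * (L : ℝ) ^ (-(j : ℤ) - 1) := by
    field_simp
  have hlen2 : (L : ℝ) ^ (-(n : ℤ)) * L = (L : ℝ) ^ (1 - (n : ℤ)) := by
    rw [show (1 - (n : ℤ)) = -(n : ℤ) + 1 by ring, zpow_add₀ hL0, zpow_one]
  refine congrArg₂ Set.Icc ?_ ?_
  · rw [hmid]
    push_cast
    ring
  · rw [hmid]
    push_cast
    rw [show (1 - ((n : ℤ) + 1)) = -(n : ℤ) by ring, ← hlen2]
    ring

lemma Amat_eq_card (L M : ℕ) (hL : 2 ≤ L) (t : Fin M → ℕ) {N : ℕ} (J : Fin N → ℤ)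
    (b : Fin L) (ℓ k : Fin N) :
    Amat L M t J b ℓ k
      = (Finset.univ.filter
          (fun i : Fin M => J ℓ * L + ((b : ℕ) : ℤ) - ((t i : ℕ) : ℤ) = J k)).card := by
  have hLpos : (0 : ℝ) < L := by positivity
  rw [Amat, ← Set.ncard_coe_finset]
  congr 1
  ext i
  simp only [Set.mem_setOf_eq, Finset.coe_filter, Finset.mem_univ, true_and]
  rw [basicInt, image_affine_Icc _ hLpos]
  have e1 : (J k : ℝ) * L / L + (t i : ℝ) = (J k : ℝ) + t i := by field_simp
  have e2 : ((J k : ℝ) * L + L) / L + (t i : ℝ) = (J k : ℝ) + t i + 1 := by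
    field_simp
    ring
  rw [e1, e2, Icc_eq_Icc_iff' (by linarith)]
  constructor
  · rintro ⟨h1, -⟩
    have : ((J ℓ * L + ((b : ℕ) : ℤ) - ((t i : ℕ) : ℤ) : ℤ) : ℝ) = ((J k : ℤ) : ℝ) := by
      push_cast
      linarith
    exact_mod_cast this
  · intro h
    have h' : ((J k : ℤ) : ℝ) = ((J ℓ * L + ((b : ℕ) : ℤ) - ((t i : ℕ) : ℤ) : ℤ) : ℝ) := by
      exact_mod_cast congrArg (fun z : ℤ => (z : ℝ)) h.symm
    push_cast at h'
    exact ⟨by linarith, by linarith⟩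

/-- **Fact.** `ν(J^ℓ_{bā}) = Σ_{k∈[N]} (1/M)·A_b(ℓ,k)·ν(J^k_ā)`. -/
theorem nu_subCylinder_recursion
    (L M : ℕ) (hL : 2 ≤ L) (hM : 0 < M)
    (t : Fin M → ℕ) (ht0 : t ⟨0, hM⟩ = 0) (hmono : Monotone t)
    (hdvd : (L - 1) ∣ t ⟨M - 1, Nat.sub_lt hM Nat.one_pos⟩)
    -- the natural self-similar measure ν (pushforward of the Bernoulli measure):
    (ν : Measure ℝ) (hνprob : IsProbabilityMeasure ν)
    (hν : ν = (M : ℝ≥0∞)⁻¹ • ∑ i : Fin M, Measure.map (fun x => x / (L : ℝ) + (t i : ℝ)) ν)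
    -- the basic types J^0 < ⋯ < J^{N-1}:
    (N : ℕ) (J : Fin N → ℤ) (hJmono : StrictMono J)
    (hJpos : ∀ k : Fin N, 0 < ν (basicInt L J k))
    (hJall : ∀ z : ℤ, 0 < ν (Set.Icc ((z : ℝ) * L) ((z : ℝ) * L + L)) → ∃ k, J k = z) :
    ∀ (ℓ : Fin N) (b : Fin L) (n : ℕ) (a : Fin n → Fin L),
      ν (subCylinder L J ℓ (Fin.cons b a))
        = ∑ k : Fin N, (M : ℝ≥0∞)⁻¹ * (Amat L M t J b ℓ k : ℝ≥0∞) * ν (subCylinder L J k a) := by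
 
  intro ℓ b n a
  classical
  have hLpos : (0 : ℝ) < L := by positivity
  set z : Fin M → ℤ := fun i => J ℓ * L + ((b : ℕ) : ℤ) - ((t i : ℕ) : ℤ) with hzdef
  have hmeas : ∀ i : Fin M, Measurable fun x : ℝ => x / (L : ℝ) + (t i : ℝ) :=
    fun i => by fun_prop
  have step1 : ν (subCylinder L J ℓ (Fin.cons b a))
      = (M : ℝ≥0∞)⁻¹ * ∑ i : Fin M, ν (genSub L (z i) a) := by
    conv_lhs => rw [hν]
    rw [Measure.smul_apply, smul_eq_mul, Measure.finset_sum_apply]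
    congr 1
    refine Finset.sum_congr rfl fun i _ => ?_
    rw [Measure.map_apply (hmeas i) (by rw [subCylinder]; exact measurableSet_Icc)]
    congr 1
    exact preimage_subCylinder L hL t J ℓ b a i
  rw [step1]
  have key : ∀ i : Fin M, ν (genSub L (z i) a)
      = ∑ k : Fin N, (if z i = J k then ν (subCylinder L J k a) else 0) := by
    intro i
    by_cases h : ∃ k, J k = z i
    · obtain ⟨k₀, hk₀⟩ := h
      rw [Finset.sum_eq_single k₀]
      · rw [if_pos hk₀.symm, ← hk₀, genSub_eq_subCylinder]
      · intro k _ hk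
        rw [if_neg]
        intro he
        exact hk (hJmono.injective (by rw [hk₀, ← he]))
      · intro h'
        exact absurd (Finset.mem_univ k₀) h'
    · have hz0 : ν (Set.Icc ((z i : ℝ) * L) ((z i : ℝ) * L + L)) = 0 := by
        by_contra h0
        exact h (hJall (z i) (pos_iff_ne_zero.mpr h0))
      have hzero : ν (genSub L (z i) a) = 0 :=
        le_antisymm (hz0 ▸ measure_mono (genSub_subset L hL (z i) a)) (zero_le ..)
      rw [hzero]
      symm
      refine Finset.sum_eq_zero fun k _ => ?_
      rw [if_neg]
      intro he
      exact h ⟨k, he.symm⟩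
  calc (M : ℝ≥0∞)⁻¹ * ∑ i : Fin M, ν (genSub L (z i) a)
      = (M : ℝ≥0∞)⁻¹ * ∑ i : Fin M, ∑ k : Fin N,
          (if z i = J k then ν (subCylinder L J k a) else 0) := by
        rw [Finset.sum_congr rfl fun i _ => key i]
    _ = (M : ℝ≥0∞)⁻¹ * ∑ k : Fin N, ∑ i : Fin M,
          (if z i = J k then ν (subCylinder L J k a) else 0) := by
        rw [Finset.sum_comm]
    _ = ∑ k : Fin N, (M : ℝ≥0∞)⁻¹ *
          (((Finset.univ.filter fun i : Fin M => z i = J k).card : ℝ≥0∞)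
            * ν (subCylinder L J k a)) := by
        rw [Finset.mul_sum]
        refine Finset.sum_congr rfl fun k _ => ?_
        congr 1
        rw [← Finset.sum_filter, Finset.sum_const, nsmul_eq_mul]
    _ = ∑ k : Fin N, (M : ℝ≥0∞)⁻¹ * (Amat L M t J b ℓ k : ℝ≥0∞)
          * ν (subCylinder L J k a) := by
        refine Finset.sum_congr rfl fun k _ => ?_
        rw [mul_assoc]
        congr 2
        rw [Amat_eq_card L M hL t J b ℓ k]
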